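/- In a complete metric linear space, the complement of a shy Borel set is dense. Equivalently, every prevalent set is dense. -/

import Mathlib

open MeasureTheory

/-- A Borel set `S` is *shy* if there is a compactly supported Borel probability
measure `μ` such that every translate of `S` has `μ`-measure zero. -/
def IsShyBorel {X : Type*} [AddGroup X] [TopologicalSpace X] [MeasurableSpace X]
    (S : Set X) : Prop :=
  MeasurableSet S ∧ ∃ μ : Measure X, IsProbabilityMeasure μ ∧
    (∃ K : Set X, IsCompact K ∧ μ Kᶜ = 0) ∧ ∀ x : X, μ ((· + x) '' S) = 0

/-- A set is *shy* if it is contained in a shy Borel set. -/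
def IsShy {X : Type*} [AddGroup X] [TopologicalSpace X] [MeasurableSpace X]
    (S : Set X) : Prop :=
  ∃ T, S ⊆ T ∧ IsShyBorel T

/-- A set is *prevalent* if its complement is shy. -/
def Prevalent {X : Type*} [AddGroup X] [TopologicalSpace X] [MeasurableSpace X]
    (S : Set X) : Prop :=
  IsShy Sᶜ

theorem compl_shy_dense {X : Type*} [AddCommGroup X] [Module ℝ X] [MetricSpace X] [CompleteSpace X]
    [IsTopologicalAddGroup X] [ContinuousSMul ℝ X] [MeasurableSpace X] [BorelSpace X]
    (S : Set X) (hS : IsShyBorel S) : Dense Sᶜ := by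
  rw [← interior_eq_empty_iff_dense_compl]
  by_contra h
  obtain ⟨x₀, hx₀⟩ := Set.nonempty_iff_ne_empty.2 h
  obtain ⟨-, μ, hμ, ⟨K, hK, hKc⟩, hshy⟩ := hS
  set U : X → Set X := fun k => (· + (k - x₀)) '' interior S with hU
  have hmem : ∀ k ∈ K, U k ∈ nhds k := by
    intro k _
    refine IsOpen.mem_nhds ((isOpenMap_add_right (k - x₀)) _ isOpen_interior) ?_
    exact ⟨x₀, hx₀, by simp⟩
  obtain ⟨t, -, ht⟩ := hK.elim_nhds_subcover U hmem
  have hK0 : μ K = 0 := by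
    refine measure_mono_null ht (measure_biUnion_null_iff t.countable_toSet |>.2 ?_)
    intro k _
    refine measure_mono_null ?_ (hshy (k - x₀))
    exact Set.image_mono interior_subset
  have : (1 : ENNReal) ≤ 0 := by
    calc (1 : ENNReal) = μ Set.univ := (measure_univ).symm
    _ ≤ μ K + μ Kᶜ := by
        rw [← Set.union_compl_self K]; exact measure_union_le _ _
    _ = 0 := by rw [hK0, hKc, add_zero]
  simp at this
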